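/- Let r, k be positive integers, let c_0,…,c_{r−1} be reals, let τ_1,…,τ_k ≥ 0 be reals, and set ξ_{j+1} = ξ_j + τ_j for j = 1,…,k with ξ_1 fixed. For s = (s_1,…,s_k) ∈ ℝ^k define a_{0,i}(s) = c_i for i = 0,…,r−1 and a_{j,r−p}(s) = Σ_{i=1}^{p} a_{j−1,r−i}(s) τ_j^{p−i}/(p−i)! + s_j τ_j^{p}/p! for j = 1,…,k and p = 1,…,r. If s, s' ∈ ℝ^k satisfy s_j ≤ s'_j for all j, then: (a) a_{j,i}(s) ≤ a_{j,i}(s') for all j = 0,…,k and i = 0,…,r−1; (b) if for each j = 1,…,k one has Σ_{i=1}^{r} a_{j−1,r−i}(s)(t−ξ_j)^{r−i}/(r−i)! + s_j(t−ξ_j)^{r}/r! ≥ 0 for all t ∈ [ξ_j, ξ_{j+1}], then the same inequalities hold with s replaced by s'; and (c) if a_{k,r−p}(s) ≥ c_{r−p} for all p = 1,…,r, then a_{k,r−p}(s') ≥ c_{r−p} for all p = 1,…,r. -/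

import Mathlib

/-- **Mathematical core of Lemma 2 of the paper.** The constants `a j i` defined by
the recursion `a 0 i = c i`,
`a j (r-p) = ∑_{i=1}^p a (j-1) (r-i) τⱼ^{p-i}/(p-i)! + sⱼ τⱼ^p/p!`
are nondecreasing in the vector `s`, and hence the timing condition (2d) and return
condition (2e) of Theorem 1 are upward closed in `s`. Here `a` and `a'` are the
constants computed from `s` and `s'` respectively. -/
theorem stmt_7 (r k : ℕ) (hr : 0 < r) (hk : 0 < k)
    (c τ : ℕ → ℝ) (hτ : ∀ j ∈ Finset.Icc 1 k, 0 ≤ τ j)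
    (ξ : ℕ → ℝ) (hξ : ∀ j ∈ Finset.Icc 1 k, ξ (j + 1) = ξ j + τ j)
    (s s' : ℕ → ℝ) (hss' : ∀ j ∈ Finset.Icc 1 k, s j ≤ s' j)
    (a a' : ℕ → ℕ → ℝ)
    (ha0 : ∀ i < r, a 0 i = c i)
    (ha'0 : ∀ i < r, a' 0 i = c i)
    (harec : ∀ j ∈ Finset.Icc 1 k, ∀ p ∈ Finset.Icc 1 r,
      a j (r - p) = (∑ i ∈ Finset.Icc 1 p,
          a (j - 1) (r - i) * τ j ^ (p - i) / (Nat.factorial (p - i) : ℝ))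
        + s j * τ j ^ p / (Nat.factorial p : ℝ))
    (ha'rec : ∀ j ∈ Finset.Icc 1 k, ∀ p ∈ Finset.Icc 1 r,
      a' j (r - p) = (∑ i ∈ Finset.Icc 1 p,
          a' (j - 1) (r - i) * τ j ^ (p - i) / (Nat.factorial (p - i) : ℝ))
        + s' j * τ j ^ p / (Nat.factorial p : ℝ)) :
    -- (a) monotonicity of the constants in s
    (∀ j ≤ k, ∀ i < r, a j i ≤ a' j i) ∧
    -- (b) the polynomial nonnegativity conditions are upward closed in s
    ((∀ j ∈ Finset.Icc 1 k, ∀ t ∈ Set.Icc (ξ j) (ξ (j + 1)),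
        (∑ i ∈ Finset.Icc 1 r,
            a (j - 1) (r - i) * (t - ξ j) ^ (r - i) / (Nat.factorial (r - i) : ℝ))
          + s j * (t - ξ j) ^ r / (Nat.factorial r : ℝ) ≥ 0) →
      (∀ j ∈ Finset.Icc 1 k, ∀ t ∈ Set.Icc (ξ j) (ξ (j + 1)),
        (∑ i ∈ Finset.Icc 1 r,
            a' (j - 1) (r - i) * (t - ξ j) ^ (r - i) / (Nat.factorial (r - i) : ℝ))
          + s' j * (t - ξ j) ^ r / (Nat.factorial r : ℝ) ≥ 0)) ∧
    -- (c) the return condition is upward closed in s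
    ((∀ p ∈ Finset.Icc 1 r, a k (r - p) ≥ c (r - p)) →
      (∀ p ∈ Finset.Icc 1 r, a' k (r - p) ≥ c (r - p))) := by

  have mono : ∀ j ≤ k, ∀ i < r, a j i ≤ a' j i := by
    intro j
    induction j with
    | zero => intro _ i hi; rw [ha0 i hi, ha'0 i hi]
    | succ j ih =>
      intro hj i hi
      have hj1 : j + 1 ∈ Finset.Icc 1 k := by simp; omega
      have hp : r - i ∈ Finset.Icc 1 r := by simp; omega
      have hri : r - (r - i) = i := by omega
      have h1 := harec (j+1) hj1 (r - i) hp
      have h2 := ha'rec (j+1) hj1 (r - i) hp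
      rw [hri] at h1 h2
      simp only [Nat.add_sub_cancel] at h1 h2
      rw [h1, h2]
      have hτj : (0:ℝ) ≤ τ (j+1) := hτ _ hj1
      apply add_le_add
      · apply Finset.sum_le_sum
        intro i' hi'
        simp only [Finset.mem_Icc] at hi'
        apply div_le_div_of_nonneg_right _ (by positivity : (0:ℝ) ≤ (Nat.factorial (r - i - i') : ℝ))
        exact mul_le_mul_of_nonneg_right (ih (by omega) (r - i') (by omega)) (pow_nonneg hτj _)
      · apply div_le_div_of_nonneg_right _ (by positivity : (0:ℝ) ≤ (Nat.factorial (r - i) : ℝ))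
        exact mul_le_mul_of_nonneg_right (hss' _ hj1) (pow_nonneg hτj _)
  refine ⟨mono, ?_, ?_⟩
  · intro h j hj t ht
    have hj' := hj
    simp only [Finset.mem_Icc] at hj'
    have htξ : (0:ℝ) ≤ t - ξ j := sub_nonneg.mpr ht.1
    refine le_trans (h j hj t ht) ?_
    apply add_le_add
    · apply Finset.sum_le_sum
      intro i' hi'
      simp only [Finset.mem_Icc] at hi'
      apply div_le_div_of_nonneg_right _ (by positivity : (0:ℝ) ≤ (Nat.factorial (r - i') : ℝ))
      exact mul_le_mul_of_nonneg_right (mono (j-1) (by omega) (r - i') (by omega)) (pow_nonneg htξ _)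
    · apply div_le_div_of_nonneg_right _ (by positivity : (0:ℝ) ≤ (Nat.factorial r : ℝ))
      exact mul_le_mul_of_nonneg_right (hss' _ hj) (pow_nonneg htξ _)
  · intro h p hp
    simp only [Finset.mem_Icc] at hp
    exact le_trans (h p (by simp [hp])) (mono k le_rfl (r - p) (by omega))
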